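/- arXiv:1010.0715 — 4 statements merged into one kernel-verified Lean document; each statement's English description precedes it below -/
import Mathlib

section
/- Let p ∈ ℂ[z₁,…,z_n] be a polynomial of multidegree at most d = (d₁,…,d_n) with no zeros in the open polydisk 𝔻ⁿ, and let p̃ be its reflection at degree d. Suppose there exist natural numbers N₁,…,N_n and polynomials A_{j,i} ∈ ℂ[z₁,…,z_n] (1 ≤ j ≤ n, 1 ≤ i ≤ N_j) such that for all z ∈ ℂⁿ: |p(z)|² − |p̃(z)|² = Σ_{j=1}^{n} (1−|z_j|²)·Σ_{i=1}^{N_j} |A_{j,i}(z)|². Then for every complex Hilbert space H, every n-tuple T₁,…,T_n of pairwise commuting bounded linear operators on H with ‖T_j‖ < 1 for all j, and every vector h ∈ H, one has ‖p̃(T₁,…,T_n) h‖ ≤ ‖p(T₁,…,T_n) h‖. (This is the von Neumann inequality expressing that p̃/p is in the Schur-Agler class of the polydisk.) -/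
open MvPolynomial

/-- The reflection of a polynomial `p` at multidegree `d`. -/
noncomputable def reflect {k : ℕ} (d : Fin k → ℕ) (p : MvPolynomial (Fin k) ℂ) :
    MvPolynomial (Fin k) ℂ :=
  ∑ α ∈ p.support,
    monomial (Finsupp.equivFunOnFinite.symm fun j => d j - α j) ((starRingEnd ℂ) (coeff α p))

/-- Evaluation of `q(z₁,…,zₙ) = Σ_α c_α z^α` on an `n`-tuple of bounded operators:
`q(T₁,…,Tₙ) = Σ_α c_α T₁^{α₁}⋯Tₙ^{αₙ}` (the product taken in the order `1,…,n`). -/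
noncomputable def opEval {n : ℕ} {H : Type*} [NormedAddCommGroup H] [InnerProductSpace ℂ H]
    (q : MvPolynomial (Fin n) ℂ) (T : Fin n → (H →L[ℂ] H)) : H →L[ℂ] H :=
  ∑ α ∈ q.support, coeff α q • ((List.finRange n).map fun j => T j ^ α j).prod



private lemma real_vanish : ∀ (m : ℕ) (Q : MvPolynomial (Fin m) ℂ),
    (∀ x : Fin m → ℝ, eval (fun i => (x i : ℂ)) Q = 0) → Q = 0 := by
  intro m
  induction m with
  | zero =>
    intro Q hQ
    obtain ⟨c, rfl⟩ := C_surjective (Fin 0) Q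
    have := hQ (fun i => 0)
    simpa using this
  | succ m ih =>
    intro Q hQ
    have key : ∀ k : ℕ, ((finSuccEquiv ℂ m Q).coeff k) = 0 := by
      intro k
      apply ih
      intro x
      have hg : (Polynomial.map (eval fun i => (x i : ℂ)) (finSuccEquiv ℂ m Q)) = 0 := by
        apply Polynomial.eq_zero_of_infinite_isRoot
        apply Set.Infinite.mono (s := Set.range ((↑) : ℝ → ℂ))
        · rintro _ ⟨t, rfl⟩
          have := hQ (Fin.cons t x)
          rw [show ((fun i => ((Fin.cons t x : Fin (m+1) → ℝ) i : ℂ)) : Fin (m+1) → ℂ)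
              = Fin.cons (t : ℂ) (fun i => (x i : ℂ)) by
            funext i; refine Fin.cases ?_ ?_ i <;> simp] at this
          rw [eval_eq_eval_mv_eval'] at this
          exact this
        · exact Set.infinite_range_of_injective Complex.ofReal_injective
      have := congrArg (fun g => Polynomial.coeff g k) hg
      simpa [Polynomial.coeff_map] using this
    have : finSuccEquiv ℂ m Q = 0 := Polynomial.ext fun k => by simp [key k]
    exact (map_eq_zero_iff _ (AlgEquiv.injective _)).mp this



private lemma real_vanish_sum {n : ℕ} (Q : MvPolynomial (Fin n ⊕ Fin n) ℂ)
    (hQ : ∀ x : Fin n ⊕ Fin n → ℝ, eval (fun s => (x s : ℂ)) Q = 0) : Q = 0 := by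
  have h := real_vanish (n + n) (rename finSumFinEquiv Q) ?_
  · exact rename_injective _ finSumFinEquiv.injective (by simpa using h)
  · intro x
    rw [eval_rename]
    exact hQ (x ∘ finSumFinEquiv)

private lemma eval_aeval' {n : ℕ} (x : Fin n ⊕ Fin n → ℂ)
    (g : Fin n ⊕ Fin n → MvPolynomial (Fin n ⊕ Fin n) ℂ)
    (Q : MvPolynomial (Fin n ⊕ Fin n) ℂ) :
    eval x (aeval g Q) = eval (fun s => eval x (g s)) Q := by
  rw [aeval_def, eval_eval₂]
  have hid : (eval x).comp (C : ℂ →+* MvPolynomial (Fin n ⊕ Fin n) ℂ) = RingHom.id ℂ := by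
    ext c; simp
  rw [show (algebraMap ℂ (MvPolynomial (Fin n ⊕ Fin n) ℂ)) = (C : ℂ →+* _) from rfl, hid,
    eval₂_id]

private lemma conj_vanish {n : ℕ} (Q : MvPolynomial (Fin n ⊕ Fin n) ℂ)
    (hQ : ∀ z : Fin n → ℂ, eval (Sum.elim z fun j => (starRingEnd ℂ) (z j)) Q = 0) : Q = 0 := by
  set g : Fin n ⊕ Fin n → MvPolynomial (Fin n ⊕ Fin n) ℂ :=
    Sum.elim (fun j => X (Sum.inl j) + C Complex.I * X (Sum.inr j))
      (fun j => X (Sum.inl j) - C Complex.I * X (Sum.inr j)) with hg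
  have hφ : aeval (R := ℂ) g Q = 0 := by
    apply real_vanish_sum
    intro x
    rw [eval_aeval']
    have : (fun s => eval (fun t => ((x t : ℂ))) (g s))
        = Sum.elim (fun j => (x (Sum.inl j) : ℂ) + Complex.I * (x (Sum.inr j) : ℂ))
          (fun j => (starRingEnd ℂ) ((x (Sum.inl j) : ℂ) + Complex.I * (x (Sum.inr j) : ℂ))) := by
      funext s
      rcases s with j | j <;>
        simp [hg, map_add, map_mul, Complex.conj_ofReal, Complex.conj_I] <;> ring
    rw [this]
    exact hQ _
  -- inverse substitution
  set ψ : MvPolynomial (Fin n ⊕ Fin n) ℂ →ₐ[ℂ] MvPolynomial (Fin n ⊕ Fin n) ℂ :=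
    aeval (Sum.elim (fun j => C (1/2 : ℂ) * (X (Sum.inl j) + X (Sum.inr j)))
      (fun j => C (-Complex.I/2 : ℂ) * (X (Sum.inl j) - X (Sum.inr j)))) with hψ
  have hcomp : ψ.comp (aeval (R := ℂ) g) = AlgHom.id ℂ _ := by
    apply algHom_ext
    intro s
    rcases s with j | j <;>
      · simp only [AlgHom.comp_apply, aeval_X, AlgHom.id_apply, hg, hψ, Sum.elim_inl,
          Sum.elim_inr, map_add, map_sub, map_mul, aeval_X, aeval_C]
        rw [show (algebraMap ℂ (MvPolynomial (Fin n ⊕ Fin n) ℂ)) = (C : ℂ →+* _) from rfl]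
        rw [show (C (Complex.I) : MvPolynomial (Fin n ⊕ Fin n) ℂ) * (C (-Complex.I/2) *
            (X (Sum.inl j) - X (Sum.inr j))) = C (Complex.I * (-Complex.I/2)) *
            (X (Sum.inl j) - X (Sum.inr j)) by rw [map_mul]; ring]
        rw [show (Complex.I * (-Complex.I/2)) = 1/2 by
          rw [div_eq_mul_inv]; ring_nf; rw [Complex.I_sq]; norm_num]
        ring_nf
        have h2 : (C (1/2 : ℂ) : MvPolynomial (Fin n ⊕ Fin n) ℂ) * 2 = 1 := by
          rw [show (2 : MvPolynomial (Fin n ⊕ Fin n) ℂ) = C 2 from (map_ofNat C 2).symm,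
            ← map_mul]
          norm_num
        rw [mul_right_comm, h2, one_mul]
  calc Q = ψ (aeval (R := ℂ) g Q) := by
        rw [← AlgHom.comp_apply, hcomp]; rfl
    _ = 0 := by rw [hφ, map_zero]


section ops
variable {n : ℕ} {H : Type*} [NormedAddCommGroup H] [InnerProductSpace ℂ H]
variable (T : Fin n → (H →L[ℂ] H))

noncomputable def monOp (a : Fin n → ℕ) : H →L[ℂ] H :=
  ((List.finRange n).map fun j => T j ^ a j).prod

lemma opEval_eq (q : MvPolynomial (Fin n) ℂ) :
    opEval q T = (AddMonoidAlgebra.coeff q).sum fun α c => c • monOp T ⇑α := by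
  rw [opEval, Finsupp.sum]
  rfl

lemma opEval_add (q q' : MvPolynomial (Fin n) ℂ) :
    opEval (q + q') T = opEval q T + opEval q' T := by
  rw [opEval_eq, opEval_eq, opEval_eq, AddMonoidAlgebra.coeff_add]
  exact Finsupp.sum_add_index' (fun α => zero_smul _ _) (fun α b₁ b₂ => add_smul _ _ _)

lemma opEval_monomial (α : Fin n →₀ ℕ) (c : ℂ) :
    opEval (monomial α c) T = c • monOp T ⇑α := by
  rw [opEval_eq]
  exact sum_monomial_eq (b := fun α c => c • monOp T ⇑α) (by rw [zero_smul])

section comm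
variable (hcomm : ∀ i j, T i * T j = T j * T i)
include hcomm

lemma monOp_list_add (a b : Fin n → ℕ) : ∀ l : List (Fin n),
    ((l.map fun j => T j ^ (a j + b j)).prod : H →L[ℂ] H) =
      (l.map fun j => T j ^ a j).prod * (l.map fun j => T j ^ b j).prod := by
  intro l
  induction l with
  | nil => simp
  | cons x l ih =>
    rw [List.map_cons, List.prod_cons, List.map_cons, List.prod_cons,
      List.map_cons, List.prod_cons, ih, pow_add]
    have hc : Commute (T x ^ b x) ((l.map fun j => T j ^ a j).prod) := by
      apply Commute.list_prod_right
      intro y hy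
      simp only [List.mem_map] at hy
      obtain ⟨j, _, rfl⟩ := hy
      exact Commute.pow_pow (hcomm x j) _ _
    rw [mul_assoc, mul_assoc, ← mul_assoc (T x ^ b x), hc.eq, mul_assoc, ← mul_assoc]

lemma monOp_add (a b : Fin n → ℕ) :
    monOp T (a + b) = monOp T a * monOp T b :=
  monOp_list_add T hcomm a b _

end comm

lemma monOp_single (j : Fin n) :
    monOp T (fun i => if j = i then 1 else 0) = T j := by
  have key : ∀ l : List (Fin n), l.Nodup → j ∈ l →
      ((l.map fun i => T i ^ (if j = i then 1 else 0)).prod : H →L[ℂ] H) = T j := by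
    intro l
    induction l with
    | nil => simp
    | cons x l ih =>
      intro hnd hmem
      rcases List.nodup_cons.mp hnd with ⟨hx, hnd'⟩
      simp only [List.map_cons, List.prod_cons]
      by_cases hxj : j = x
      · subst hxj
        have : ((l.map fun i => T i ^ (if j = i then 1 else 0)).prod : H →L[ℂ] H) = 1 := by
          apply List.prod_eq_one
          intro y hy
          simp only [List.mem_map] at hy
          obtain ⟨i, hi, rfl⟩ := hy
          have : j ≠ i := fun hji => hx (hji ▸ hi)
          simp [if_neg this]
        rw [if_pos rfl, pow_one, this, mul_one]
      · have hmem' : j ∈ l := by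
          rcases List.mem_cons.mp hmem with h | h
          · exact absurd h hxj
          · exact h
        rw [if_neg hxj, pow_zero, one_mul]
        exact ih hnd' hmem'
  exact key _ (List.nodup_finRange n) (List.mem_finRange j)

lemma opEval_X_mul (hcomm : ∀ i j, T i * T j = T j * T i) (j : Fin n)
    (q : MvPolynomial (Fin n) ℂ) :
    opEval (X j * q) T = T j * opEval q T := by
  induction q using MvPolynomial.induction_on' with
  | monomial α c =>
    rw [show (X j * monomial α c : MvPolynomial (Fin n) ℂ)
        = monomial (Finsupp.single j 1 + α) c by
      rw [monomial_single_add, pow_one]]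
    rw [opEval_monomial, opEval_monomial]
    have hfun : monOp T ((Finsupp.single j 1 + α : Fin n →₀ ℕ) : Fin n → ℕ)
        = monOp T ((fun i => if j = i then 1 else 0) + ⇑α) := by
      congr 1
      funext i
      simp [Finsupp.single_apply]
    rw [hfun, monOp_add T hcomm, monOp_single, mul_smul_comm]
  | add q1 q2 h1 h2 =>
    rw [mul_add, opEval_add, opEval_add, h1, h2, mul_add]
end ops


section her
variable {n : ℕ} {H : Type*} [NormedAddCommGroup H] [InnerProductSpace ℂ H]

noncomputable def herW (T : Fin n → (H →L[ℂ] H)) (h : H) (γ : (Fin n ⊕ Fin n) →₀ ℕ) : ℂ :=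
  inner ℂ (monOp T (fun j => γ (Sum.inr j)) h) (monOp T (fun j => γ (Sum.inl j)) h)

noncomputable def her (T : Fin n → (H →L[ℂ] H)) (h : H) :
    MvPolynomial (Fin n ⊕ Fin n) ℂ →+ ℂ where
  toFun Q := (AddMonoidAlgebra.coeff Q).sum fun γ c => c * herW T h γ
  map_zero' := Finsupp.sum_zero_index
  map_add' Q Q' := by
    rw [AddMonoidAlgebra.coeff_add]
    exact Finsupp.sum_add_index' (h := fun γ c => c * herW T h γ)
      (fun γ => zero_mul _) (fun γ b₁ b₂ => add_mul _ _ _)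

lemma her_monomial (T : Fin n → (H →L[ℂ] H)) (h : H) (γ : (Fin n ⊕ Fin n) →₀ ℕ) (c : ℂ) :
    her T h (monomial γ c) = c * herW T h γ := by
  exact sum_monomial_eq (b := fun γ c => c * herW T h γ) (zero_mul _)

noncomputable def tens (q r : MvPolynomial (Fin n) ℂ) : MvPolynomial (Fin n ⊕ Fin n) ℂ :=
  rename Sum.inl q * rename Sum.inr (MvPolynomial.map (starRingEnd ℂ) r)

lemma tens_add_left (q₁ q₂ r : MvPolynomial (Fin n) ℂ) :
    tens (q₁ + q₂) r = tens q₁ r + tens q₂ r := by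
  rw [tens, tens, tens, map_add, add_mul]

lemma tens_add_right (q r₁ r₂ : MvPolynomial (Fin n) ℂ) :
    tens q (r₁ + r₂) = tens q r₁ + tens q r₂ := by
  rw [tens, tens, tens, map_add, map_add, mul_add]

lemma tens_monomial (α β : Fin n →₀ ℕ) (c e : ℂ) :
    tens (monomial α c) (monomial β e) =
      monomial (α.mapDomain Sum.inl + β.mapDomain Sum.inr) (c * (starRingEnd ℂ) e) := by
  rw [tens, map_monomial, rename_monomial, rename_monomial, monomial_mul]
end her
section main
variable {n : ℕ} {H : Type*} [NormedAddCommGroup H] [InnerProductSpace ℂ H]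

lemma her_tens (T : Fin n → (H →L[ℂ] H)) (h : H) (q r : MvPolynomial (Fin n) ℂ) :
    her T h (tens q r) = (inner ℂ (opEval r T h) (opEval q T h) : ℂ) := by
  induction q using MvPolynomial.induction_on' with
  | add q₁ q₂ hq₁ hq₂ =>
    rw [tens_add_left, map_add, hq₁, hq₂, opEval_add, ContinuousLinearMap.add_apply,
      inner_add_right]
  | monomial α c =>
    induction r using MvPolynomial.induction_on' with
    | add r₁ r₂ hr₁ hr₂ =>
      rw [tens_add_right, map_add, hr₁, hr₂, opEval_add, ContinuousLinearMap.add_apply,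
        inner_add_left]
    | monomial β e =>
      rw [tens_monomial, her_monomial, opEval_monomial, opEval_monomial]
      have h1 : (fun j => (α.mapDomain Sum.inl + β.mapDomain Sum.inr :
          (Fin n ⊕ Fin n) →₀ ℕ) (Sum.inr j)) = ⇑β := by
        funext j
        rw [Finsupp.add_apply, Finsupp.mapDomain_notin_range _ _ (by simp),
          Finsupp.mapDomain_apply Sum.inr_injective, zero_add]
      have h2 : (fun j => (α.mapDomain Sum.inl + β.mapDomain Sum.inr :
          (Fin n ⊕ Fin n) →₀ ℕ) (Sum.inl j)) = ⇑α := by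
        funext j
        rw [Finsupp.add_apply, Finsupp.mapDomain_apply Sum.inl_injective,
          Finsupp.mapDomain_notin_range _ _ (by simp), add_zero]
      rw [herW, h1, h2, ContinuousLinearMap.smul_apply, ContinuousLinearMap.smul_apply,
        inner_smul_left, inner_smul_right]
      ring

lemma tens_X_mul (j : Fin n) (q : MvPolynomial (Fin n) ℂ) :
    tens (X j * q) (X j * q) = X (Sum.inl j) * X (Sum.inr j) * tens q q := by
  rw [tens, tens, map_mul, map_mul, map_mul, rename_X, map_X, rename_X]
  ring

lemma eval_tens (z : Fin n → ℂ) (q r : MvPolynomial (Fin n) ℂ) :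
    eval (Sum.elim z fun j => (starRingEnd ℂ) (z j)) (tens q r) =
      eval z q * (starRingEnd ℂ) (eval z r) := by
  rw [tens, map_mul, eval_rename, eval_rename, Sum.elim_comp_inl, Sum.elim_comp_inr, eval_map]
  congr 1
  have h := eval₂_comp_left (starRingEnd ℂ) (RingHom.id ℂ) z r
  rw [eval₂_id, RingHom.comp_id] at h
  exact h.symm

lemma mul_conj_norm' (a : ℂ) : a * (starRingEnd ℂ) a = ((‖a‖ ^ 2 : ℝ) : ℂ) := by
  rw [Complex.mul_conj, Complex.normSq_eq_norm_sq]
end main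

/-- One direction of Theorem 1 of the paper: an Agler (sums-of-squares) decomposition of
`|p|² - |p̃|²` implies the von Neumann inequality `‖p̃(T)h‖ ≤ ‖p(T)h‖` for all commuting
tuples of strict contractions, i.e. `p̃/p` is in the Schur–Agler class of the polydisk. -/
theorem sos_decomposition_implies_von_neumann (n : ℕ) (d : Fin n → ℕ)
    (p : MvPolynomial (Fin n) ℂ)
    (hdeg : ∀ j, p.degreeOf j ≤ d j)
    (hpz : ∀ z : Fin n → ℂ, (∀ j, ‖z j‖ < 1) → eval z p ≠ 0)
    (N : Fin n → ℕ) (A : (j : Fin n) → Fin (N j) → MvPolynomial (Fin n) ℂ)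
    (hsos : ∀ z : Fin n → ℂ,
      ‖eval z p‖ ^ 2 - ‖eval z (reflect d p)‖ ^ 2 =
        ∑ j, (1 - ‖z j‖ ^ 2) * ∑ i, ‖eval z (A j i)‖ ^ 2)
    (H : Type) [NormedAddCommGroup H] [InnerProductSpace ℂ H] [CompleteSpace H]
    (T : Fin n → (H →L[ℂ] H))
    (hcomm : ∀ i j, T i * T j = T j * T i)
    (hT : ∀ j, ‖T j‖ < 1) (h : H) :
    ‖opEval (reflect d p) T h‖ ≤ ‖opEval p T h‖ := by
  
  classical
  set pt := reflect d p with hpt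
  set S : MvPolynomial (Fin n ⊕ Fin n) ℂ :=
    tens p p - tens pt pt -
      ∑ j, ((∑ i, tens (A j i) (A j i)) - ∑ i, tens (X j * A j i) (X j * A j i)) with hSdef
  have hv : ∀ z : Fin n → ℂ, eval (Sum.elim z fun j => (starRingEnd ℂ) (z j)) S = 0 := by
    intro z
    have hz := hsos z
    have hz2 : ‖eval z p‖ ^ 2 - ‖eval z pt‖ ^ 2 =
        ∑ j, ((∑ i, ‖eval z (A j i)‖ ^ 2) - ∑ i, ‖eval z (X j * A j i)‖ ^ 2) := by
      rw [hz]
      apply Finset.sum_congr rfl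
      intro j _
      rw [one_sub_mul, Finset.mul_sum]
      congr 1
      apply Finset.sum_congr rfl
      intro i _
      rw [map_mul, eval_X, norm_mul, mul_pow]
    have hreal : ‖eval z p‖ ^ 2 - ‖eval z pt‖ ^ 2 -
        ∑ j, ((∑ i, ‖eval z (A j i)‖ ^ 2) - ∑ i, ‖eval z (X j * A j i)‖ ^ 2) = 0 := by
      rw [hz2, sub_self]
    rw [hSdef]
    simp only [map_sub, map_sum, eval_tens, mul_conj_norm']
    exact_mod_cast hreal
  have hS0 : S = 0 := conj_vanish S hv
  have hher : her T h S = 0 := by rw [hS0, map_zero]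
  rw [hSdef] at hher
  simp only [map_sub, map_sum, her_tens, opEval_X_mul T hcomm,
    ContinuousLinearMap.mul_apply, inner_self_eq_norm_sq_to_K] at hher
  have hrealid : ‖opEval p T h‖ ^ 2 - ‖opEval pt T h‖ ^ 2 -
      ∑ j, ((∑ i, ‖opEval (A j i) T h‖ ^ 2) - ∑ i, ‖(T j) (opEval (A j i) T h)‖ ^ 2) = 0 := by
    apply Complex.ofReal_injective
    push_cast
    exact hher
  have hsum : 0 ≤ ∑ j, ((∑ i, ‖opEval (A j i) T h‖ ^ 2)
      - ∑ i, ‖(T j) (opEval (A j i) T h)‖ ^ 2) := by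
    apply Finset.sum_nonneg
    intro j _
    rw [sub_nonneg]
    apply Finset.sum_le_sum
    intro i _
    apply pow_le_pow_left₀ (norm_nonneg _) _ 2
    calc ‖(T j) (opEval (A j i) T h)‖ ≤ ‖T j‖ * ‖opEval (A j i) T h‖ := (T j).le_opNorm _
      _ ≤ 1 * ‖opEval (A j i) T h‖ :=
        mul_le_mul_of_nonneg_right (le_of_lt (hT j)) (norm_nonneg _)
      _ = ‖opEval (A j i) T h‖ := one_mul _
  have hsq : ‖opEval pt T h‖ ^ 2 ≤ ‖opEval p T h‖ ^ 2 := by linarith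
  exact (pow_le_pow_iff_left₀ (norm_nonneg _) (norm_nonneg _) two_ne_zero).mp hsq
end

section
/- Let a, b ∈ ℂ[z₁,z₂] be polynomials of multidegree at most (n,m), and let b̃ be the reflection of b at degree (n,m). Suppose a has no zeros on the closed bidisk cl(𝔻)², and |b(z₁,z₂)| < |a(z₁,z₂)| for all (z₁,z₂) ∈ 𝕋². Then |b̃(z₁,z₂)| < |a(z₁,z₂)| for all (z₁,z₂) ∈ cl(𝔻)²; in particular, for any integers r,s ≥ 0 the polynomial a(z₁,z₂) + z₁^r z₂^s b̃(z₁,z₂) has no zeros on cl(𝔻)². -/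
open MvPolynomial

private lemma diff_eval_update (p : MvPolynomial (Fin 2) ℂ) (z : Fin 2 → ℂ) (j : Fin 2) :
    Differentiable ℂ fun w => eval (Function.update z j w) p := by
  induction p using MvPolynomial.induction_on with
  | C c => simpa using differentiable_const c
  | add p q hp hq => simp only [map_add]; exact hp.add hq
  | mul_X p i hp =>
      simp only [eval_mul, eval_X]
      refine hp.mul ?_
      rcases eq_or_ne i j with rfl | h
      · simpa using differentiable_id
      · simp only [Function.update_of_ne h]
        exact differentiable_const _

private lemma max_modulus_step (p q : MvPolynomial (Fin 2) ℂ) (j : Fin 2) (z : Fin 2 → ℂ)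
    (C : ℝ)
    (hq : ∀ w : ℂ, ‖w‖ ≤ 1 → eval (Function.update z j w) q ≠ 0)
    (hb : ∀ w : ℂ, ‖w‖ = 1 →
      ‖eval (Function.update z j w) p‖ ≤ C * ‖eval (Function.update z j w) q‖)
    (hzj : ‖z j‖ ≤ 1) :
    ‖eval z p‖ ≤ C * ‖eval z q‖ := by
  set f : ℂ → ℂ :=
    fun w => eval (Function.update z j w) p / eval (Function.update z j w) q with hf
  have hdp := diff_eval_update p z j
  have hdq := diff_eval_update q z j
  have hcl : closure (Metric.ball (0:ℂ) 1) = Metric.closedBall 0 1 := closure_ball 0 one_ne_zero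
  have hfr : frontier (Metric.ball (0:ℂ) 1) = Metric.sphere 0 1 := frontier_ball 0 one_ne_zero
  have hdc : DiffContOnCl ℂ f (Metric.ball 0 1) := by
    constructor
    · refine DifferentiableOn.div hdp.differentiableOn hdq.differentiableOn ?_
      intro x hx
      exact hq x (le_of_lt (by simpa using hx))
    · rw [hcl]
      refine ContinuousOn.div hdp.continuous.continuousOn hdq.continuous.continuousOn ?_
      intro x hx
      exact hq x (by simpa using hx)
  have key : ‖f (z j)‖ ≤ C := by
    refine Complex.norm_le_of_forall_mem_frontier_norm_le Metric.isBounded_ball hdc ?_ ?_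
    · intro w hw
      rw [hfr] at hw
      have hw1 : ‖w‖ = 1 := by simpa using hw
      have hqpos : 0 < ‖eval (Function.update z j w) q‖ :=
        norm_pos_iff.mpr (hq w hw1.le)
      rw [hf]
      simp only
      rw [norm_div, div_le_iff₀ hqpos]
      exact hb w hw1
    · rw [hcl]
      simpa using hzj
  have hupd : Function.update z j (z j) = z := Function.update_eq_self j z
  have hqz : eval z q ≠ 0 := by
    have := hq (z j) hzj
    rwa [hupd] at this
  rw [hf] at key
  simp only [hupd] at key
  rwa [norm_div, div_le_iff₀ (norm_pos_iff.mpr hqz)] at key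

private lemma eval_reflect_torus {k : ℕ} (d : Fin k → ℕ) (b : MvPolynomial (Fin k) ℂ)
    (hd : ∀ α ∈ b.support, ∀ j, α j ≤ d j)
    (z : Fin k → ℂ) (hz : ∀ j, ‖z j‖ = 1) :
    eval z (reflect d b) = (∏ j, z j ^ d j) * (starRingEnd ℂ) (eval z b) := by
  have hzne : ∀ j, z j ≠ 0 := fun j h => by simpa [h] using hz j
  have hconj : ∀ j, (starRingEnd ℂ) (z j) = (z j)⁻¹ := fun j =>
    (Complex.inv_eq_conj (hz j)).symm
  rw [reflect, map_sum, eval_eq' z b, map_sum, Finset.mul_sum]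
  refine Finset.sum_congr rfl fun α hα => ?_
  rw [eval_monomial, Finsupp.prod_pow, map_mul]
  have hcoe : ∀ j, (Finsupp.equivFunOnFinite.symm fun j => d j - α j) j = d j - α j := by
    intro j; rfl
  simp only [hcoe]
  rw [mul_comm ((∏ j, z j ^ d j)) _, mul_assoc]
  congr 1
  rw [map_prod, ← Finset.prod_mul_distrib]
  refine Finset.prod_congr rfl fun j _ => ?_
  rw [map_pow, hconj j, inv_pow, mul_comm]
  exact pow_sub₀ (z j) (hzne j) (hd α hα j)

/-- If `a` has no zeros on the closed bidisk and `|b| < |a|` on the 2-torus, then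
`|b̃| < |a|` on the whole closed bidisk (where `b̃` is the reflection of `b` at degree
`(n,m)`); in particular `a + z₁ʳz₂ˢ b̃` has no zeros on the closed bidisk. -/
theorem reflection_strictly_dominated (n m : ℕ) (a b : MvPolynomial (Fin 2) ℂ)
    (hadeg : ∀ j, a.degreeOf j ≤ ![n, m] j)
    (hbdeg : ∀ j, b.degreeOf j ≤ ![n, m] j)
    (haz : ∀ z : Fin 2 → ℂ, (∀ j, ‖z j‖ ≤ 1) → eval z a ≠ 0)
    (hba : ∀ z : Fin 2 → ℂ, (∀ j, ‖z j‖ = 1) → ‖eval z b‖ < ‖eval z a‖) :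
    (∀ z : Fin 2 → ℂ, (∀ j, ‖z j‖ ≤ 1) →
      ‖eval z (reflect ![n, m] b)‖ < ‖eval z a‖) ∧
    (∀ r s : ℕ, ∀ z : Fin 2 → ℂ, (∀ j, ‖z j‖ ≤ 1) →
      eval z a + z 0 ^ r * z 1 ^ s * eval z (reflect ![n, m] b) ≠ 0) := by
  -- support bound for b
  have hsupp : ∀ α ∈ b.support, ∀ j, α j ≤ ![n, m] j := by
    intro α hα j
    exact le_trans (MvPolynomial.monomial_le_degreeOf j hα) (hbdeg j)
  -- torus norm identity
  have htorusR : ∀ z : Fin 2 → ℂ, (∀ j, ‖z j‖ = 1) →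
      ‖eval z (reflect ![n, m] b)‖ = ‖eval z b‖ := by
    intro z hz
    rw [eval_reflect_torus _ b hsupp z hz, norm_mul, RCLike.norm_conj]
    have : ‖∏ j, z j ^ (![n, m] j)‖ = 1 := by
      rw [norm_prod]
      refine Finset.prod_eq_one fun j _ => ?_
      rw [norm_pow, hz j, one_pow]
    rw [this, one_mul]
  -- compactness on the torus
  set T : Set (Fin 2 → ℂ) := Set.pi Set.univ (fun _ => Metric.sphere (0:ℂ) 1) with hT
  have hmem : ∀ z : Fin 2 → ℂ, z ∈ T ↔ ∀ j, ‖z j‖ = 1 := by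
    intro z
    simp [hT, Set.mem_pi, mem_sphere_iff_norm]
  have hTc : IsCompact T := isCompact_univ_pi fun _ => isCompact_sphere 0 1
  have hTne : T.Nonempty := ⟨fun _ => 1, (hmem _).mpr fun j => by simp⟩
  have hane : ∀ z ∈ T, eval z a ≠ 0 := fun z hz =>
    haz z fun j => le_of_eq ((hmem z).mp hz j)
  have hφcont : ContinuousOn (fun z : Fin 2 → ℂ => ‖eval z b‖ / ‖eval z a‖) T := by
    refine ContinuousOn.div ?_ ?_ ?_
    · exact (MvPolynomial.continuous_eval (p := b)).norm.continuousOn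
    · exact (MvPolynomial.continuous_eval (p := a)).norm.continuousOn
    · intro z hz
      exact norm_ne_zero_iff.mpr (hane z hz)
  obtain ⟨z₀, hz₀T, hmax⟩ := hTc.exists_isMaxOn hTne hφcont
  set c : ℝ := ‖eval z₀ b‖ / ‖eval z₀ a‖ with hc
  have ha₀pos : 0 < ‖eval z₀ a‖ := norm_pos_iff.mpr (hane z₀ hz₀T)
  have hc1 : c < 1 := (div_lt_one ha₀pos).mpr (hba z₀ ((hmem z₀).mp hz₀T))
  have hbound : ∀ z : Fin 2 → ℂ, (∀ j, ‖z j‖ = 1) → ‖eval z b‖ ≤ c * ‖eval z a‖ := by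
    intro z hz
    have hzT : z ∈ T := (hmem z).mpr hz
    have hapos : 0 < ‖eval z a‖ := norm_pos_iff.mpr (hane z hzT)
    have h' : ‖eval z b‖ / ‖eval z a‖ ≤ c := hmax hzT
    rwa [div_le_iff₀ hapos] at h'
  -- boundary bound for the reflection
  have hRbound : ∀ z : Fin 2 → ℂ, (∀ j, ‖z j‖ = 1) →
      ‖eval z (reflect ![n, m] b)‖ ≤ c * ‖eval z a‖ := by
    intro z hz
    rw [htorusR z hz]
    exact hbound z hz
  have hone : (1 : Fin 2) ≠ 0 := by decide
  have hzero : (0 : Fin 2) ≠ 1 := by decide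
  -- Claim A: |R| ≤ c|a| for |z₀|≤1, |z₁|=1
  have claimA : ∀ z : Fin 2 → ℂ, ‖z 0‖ ≤ 1 → ‖z 1‖ = 1 →
      ‖eval z (reflect ![n, m] b)‖ ≤ c * ‖eval z a‖ := by
    intro z h0 h1
    have e00 : ∀ w : ℂ, Function.update z 0 w 0 = w := fun w => Function.update_self 0 w z
    have e01 : ∀ w : ℂ, Function.update z 0 w 1 = z 1 := fun w => Function.update_of_ne hone w z
    refine max_modulus_step _ a 0 z c ?_ ?_ h0
    · intro w hw
      refine haz _ fun i => ?_
      fin_cases i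
      · show ‖Function.update z 0 w 0‖ ≤ 1
        rw [e00]; exact hw
      · show ‖Function.update z 0 w 1‖ ≤ 1
        rw [e01]; exact le_of_eq h1
    · intro w hw
      have hz' : ∀ j, ‖Function.update z 0 w j‖ = 1 := by
        intro j
        fin_cases j
        · show ‖Function.update z 0 w 0‖ = 1
          rw [e00]; exact hw
        · show ‖Function.update z 0 w 1‖ = 1
          rw [e01]; exact h1
      exact hRbound _ hz'
  -- Claim B: |R| ≤ c|a| on the whole closed bidisk
  have claimB : ∀ z : Fin 2 → ℂ, (∀ j, ‖z j‖ ≤ 1) →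
      ‖eval z (reflect ![n, m] b)‖ ≤ c * ‖eval z a‖ := by
    intro z hz
    have e10 : ∀ w : ℂ, Function.update z 1 w 0 = z 0 := fun w => Function.update_of_ne hzero w z
    have e11 : ∀ w : ℂ, Function.update z 1 w 1 = w := fun w => Function.update_self 1 w z
    refine max_modulus_step _ a 1 z c ?_ ?_ (hz 1)
    · intro w hw
      refine haz _ fun i => ?_
      fin_cases i
      · show ‖Function.update z 1 w 0‖ ≤ 1
        rw [e10]; exact hz 0
      · show ‖Function.update z 1 w 1‖ ≤ 1
        rw [e11]; exact hw
    · intro w hw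
      have h0 : ‖Function.update z 1 w 0‖ ≤ 1 := by rw [e10]; exact hz 0
      have h1 : ‖Function.update z 1 w 1‖ = 1 := by rw [e11]; exact hw
      exact claimA _ h0 h1
  -- strict inequality
  have hstrict : ∀ z : Fin 2 → ℂ, (∀ j, ‖z j‖ ≤ 1) →
      ‖eval z (reflect ![n, m] b)‖ < ‖eval z a‖ := by
    intro z hz
    have hapos : 0 < ‖eval z a‖ := norm_pos_iff.mpr (haz z hz)
    calc ‖eval z (reflect ![n, m] b)‖ ≤ c * ‖eval z a‖ := claimB z hz
      _ < 1 * ‖eval z a‖ := by exact mul_lt_mul_of_pos_right hc1 hapos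
      _ = ‖eval z a‖ := one_mul _
  refine ⟨hstrict, ?_⟩
  intro r s z hz heq
  have h1 : ‖z 0 ^ r * z 1 ^ s * eval z (reflect ![n, m] b)‖ < ‖eval z a‖ := by
    have hle : ‖z 0 ^ r * z 1 ^ s‖ ≤ 1 := by
      rw [norm_mul, norm_pow, norm_pow]
      exact mul_le_one₀ (pow_le_one₀ (norm_nonneg _) (hz 0)) (by positivity)
        (pow_le_one₀ (norm_nonneg _) (hz 1))
    calc ‖z 0 ^ r * z 1 ^ s * eval z (reflect ![n, m] b)‖
        = ‖z 0 ^ r * z 1 ^ s‖ * ‖eval z (reflect ![n, m] b)‖ := norm_mul _ _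
      _ ≤ 1 * ‖eval z (reflect ![n, m] b)‖ :=
          mul_le_mul_of_nonneg_right hle (norm_nonneg _)
      _ = ‖eval z (reflect ![n, m] b)‖ := one_mul _
      _ < ‖eval z a‖ := hstrict z hz
  have h2 : eval z a = -(z 0 ^ r * z 1 ^ s * eval z (reflect ![n, m] b)) :=
    eq_neg_of_add_eq_zero_left heq
  rw [h2, norm_neg] at h1
  exact lt_irrefl _ h1
end

section
/- Let n, m ≥ 0, r, s ≥ 0 and N ≥ 1 be integers. Let a, b ∈ ℂ[z₁,z₂] have multidegree at most (n,m), with reflections ã, b̃ at degree (n,m). Let E₁,…,E_N ∈ ℂ[z₁,z₂] have multidegree at most (n+r, m+s), with reflections Ẽ₁,…,Ẽ_N at degree (n+r, m+s); write E for the column vector (E₁,…,E_N)ᵗ and Ẽᵗ for the row vector (Ẽ₁,…,Ẽ_N). Assume: (i) a has no zeros on the closed bidisk cl(𝔻)²; (ii) a + z₁^r z₂^s b̃ has no zeros on cl(𝔻)²; (iii) Σ_{i=1}^{N} |E_i(z₁,z₂)|² = |a(z₁,z₂)|² − |b(z₁,z₂)|² for all (z₁,z₂) ∈ 𝕋². Define,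 for (z₁,z₂) ∈ 𝕋², the (N+1)×(N+1) complex matrix V(z₁,z₂) = (1/a(z₁,z₂)) · [ [ z₁^r z₂^s b̃ , Ẽᵗ ] ; [ E , (E·Ẽᵗ − a·(z₁^r z₂^s ã + b)·I_N)/(a + z₁^r z₂^s b̃) ] ], where all polynomial entries are evaluated at (z₁,z₂) and I_N is the N×N identity matrix. Then V(z₁,z₂) is a unitary matrix for every (z₁,z₂) ∈ 𝕋². -/
open MvPolynomial

lemma reflect_eval {k : ℕ} (d : Fin k → ℕ) (p : MvPolynomial (Fin k) ℂ)
    (hdeg : ∀ j, p.degreeOf j ≤ d j) (z : Fin k → ℂ) (hz : ∀ j, ‖z j‖ = 1) :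
    eval z (reflect d p) = (∏ j, z j ^ d j) * (starRingEnd ℂ) (eval z p) := by
  have hzc : ∀ j, z j * (starRingEnd ℂ) (z j) = 1 := by
    intro j; rw [Complex.mul_conj']; norm_cast; simp [hz j]
  rw [reflect, map_sum, eval_eq']
  rw [map_sum, Finset.mul_sum]
  apply Finset.sum_congr rfl
  intro α hα
  rw [eval_monomial]
  have h1 : ((Finsupp.equivFunOnFinite.symm fun j => d j - α j : Fin k →₀ ℕ).prod fun i e => z i ^ e)
      = ∏ j, z j ^ (d j - α j) := by
    rw [Finsupp.prod_pow]; rfl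
  rw [h1, map_mul, map_prod]
  have hα' : ∀ j, α j ≤ d j :=
    fun j => le_trans (MvPolynomial.monomial_le_degreeOf j hα) (hdeg j)
  have h3 : ∏ j, z j ^ (d j - α j) = (∏ j, z j ^ d j) * ∏ j, (starRingEnd ℂ) (z j ^ α j) := by
    rw [← Finset.prod_mul_distrib]
    apply Finset.prod_congr rfl
    intro j _
    rw [map_pow]
    have h2 : z j ^ d j = z j ^ (d j - α j) * z j ^ α j := by
      rw [← pow_add, Nat.sub_add_cancel (hα' j)]
    rw [h2, mul_assoc, ← mul_pow, hzc j, one_pow, mul_one]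
  rw [h3]; ring

lemma reflect_eval₂ (p q : ℕ) (f : MvPolynomial (Fin 2) ℂ)
    (hdeg : ∀ j, f.degreeOf j ≤ ![p, q] j) (z : Fin 2 → ℂ) (hz : ∀ j, ‖z j‖ = 1) :
    eval z (reflect ![p, q] f) = z 0 ^ p * z 1 ^ q * (starRingEnd ℂ) (eval z f) := by
  rw [reflect_eval _ _ hdeg z hz, Fin.prod_univ_two]
  norm_num

open Finset

local notation "conj'" => starRingEnd ℂ

lemma zero_ne_succ' {n : ℕ} (x : Fin n) : (0 : Fin (n + 1)) ≠ x.succ :=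
  (Fin.succ_ne_zero x).symm

set_option maxHeartbeats 2000000 in
lemma key {N : ℕ} (A A' B B' w u : ℂ) (e e' : Fin N → ℂ)
    (hA : A ≠ 0) (hA' : A' ≠ 0) (hw : w ≠ 0) (hu : u ≠ 0)
    (hγ : A + w * (u * B') ≠ 0) (hγ' : A' + w⁻¹ * (u⁻¹ * B) ≠ 0)
    (cA : conj' A = A') (cA' : conj' A' = A) (cB : conj' B = B') (cB' : conj' B' = B)
    (cw : conj' w = w⁻¹) (cu : conj' u = u⁻¹)
    (ce : ∀ i, conj' (e i) = e' i) (ce' : ∀ i, conj' (e' i) = e i)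
    (hS : ∑ i, e' i * e i = A' * A - B' * B) :
    (Matrix.of fun i k : Fin (N + 1) =>
      A⁻¹ *
        if hi : i = 0 then
          if hk : k = 0 then w * (u * B')
          else u * w * e' (k.pred hk)
        else
          if hk : k = 0 then e (i.pred hi)
          else
            (e (i.pred hi) * (u * w * e' (k.pred hk))
                - A * (w * (u * A') + B) * (if i = k then 1 else 0)) /
              (A + w * (u * B')))
      ∈ Matrix.unitaryGroup (Fin (N + 1)) ℂ := by
  have cγ : conj' (A + w * (u * B')) = (u * w)⁻¹ * (u * w * A' + B) := by
    rw [map_add, map_mul, map_mul, cA, cw, cu, cB']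
    field_simp
  have hγ₂ : u * w * A' + B ≠ 0 := by
    intro h
    apply hγ'
    have hid : A' + w⁻¹ * (u⁻¹ * B) = (u * w)⁻¹ * (u * w * A' + B) := by
      field_simp
    rw [hid, h, mul_zero]
  rw [Matrix.mem_unitaryGroup_iff']
  ext j k
  rw [Matrix.mul_apply, Matrix.one_apply]
  simp only [Matrix.star_apply, Matrix.of_apply, Complex.star_def]
  induction j using Fin.cases with
  | zero =>
    induction k using Fin.cases with
    | zero =>
      rw [Fin.sum_univ_succ]
      simp only [Fin.pred_succ, Fin.succ_ne_zero, zero_ne_succ', Fin.succ_inj, dite_true,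
        dite_false, ite_true, ite_false, eq_self_iff_true, mul_zero, mul_one, sub_zero,
        dif_pos, dif_neg, not_false_iff]
      have h1 : ∑ i : Fin N, conj' (A⁻¹ * e i) * (A⁻¹ * e i)
          = A'⁻¹ * A⁻¹ * (A' * A - B' * B) := by
        rw [← hS, Finset.mul_sum]
        refine Finset.sum_congr rfl fun i _ => ?_
        rw [map_mul, map_inv₀, cA, ce]; ring
      rw [h1, map_mul, map_mul, map_mul, map_inv₀, cA, cw, cu, cB']
      field_simp
      ring
    | succ k =>
      rw [Fin.sum_univ_succ]
      simp only [Fin.pred_succ, Fin.succ_ne_zero, zero_ne_succ', Fin.succ_inj, dite_true,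
        dite_false, ite_true, ite_false, eq_self_iff_true, mul_zero, mul_one, sub_zero,
        dif_pos, dif_neg, not_false_iff]
      have h2 : ∑ i : Fin N,
          conj' (A⁻¹ * e i) *
            (A⁻¹ * ((e i * (u * w * e' k) - A * (w * (u * A') + B) * if i = k then 1 else 0) /
              (A + w * (u * B'))))
          = A'⁻¹ * A⁻¹ * (A + w * (u * B'))⁻¹ *
              ((A' * A - B' * B) * (u * w * e' k) - A * (w * (u * A') + B) * e' k) := by
        have hterm : ∀ i : Fin N,
            conj' (A⁻¹ * e i) *
              (A⁻¹ * ((e i * (u * w * e' k) - A * (w * (u * A') + B) * if i = k then 1 else 0) /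
                (A + w * (u * B'))))
            = (A'⁻¹ * A⁻¹ * (A + w * (u * B'))⁻¹ * (u * w * e' k)) * (e' i * e i)
              + (if i = k then -(A'⁻¹ * A⁻¹ * (A + w * (u * B'))⁻¹ * (A * (w * (u * A') + B)) * e' i) else 0) := by
          intro i
          rw [map_mul, map_inv₀, cA, ce, div_eq_mul_inv]
          split_ifs with h
          · ring
          · ring
        rw [Finset.sum_congr rfl fun i _ => hterm i, Finset.sum_add_distrib, ← Finset.mul_sum, hS,
          Finset.sum_ite_eq' Finset.univ k
            (fun i => -(A'⁻¹ * A⁻¹ * (A + w * (u * B'))⁻¹ * (A * (w * (u * A') + B)) * e' i))]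
        simp only [Finset.mem_univ, if_pos]
        ring
      rw [h2, map_mul, map_mul, map_mul, map_inv₀, cA, cw, cu, cB']
      field_simp [hA, hA', hw, hu, hγ, hγ₂]
      have hγ3 : w * u * B' + A ≠ 0 := fun h => hγ (by linear_combination h)
      linear_combination -(e' k * B) * mul_inv_cancel₀ hγ3
  | succ j =>
    induction k using Fin.cases with
    | zero =>
      rw [Fin.sum_univ_succ]
      simp only [Fin.pred_succ, Fin.succ_ne_zero, zero_ne_succ', Fin.succ_inj, dite_true,
        dite_false, ite_true, ite_false, eq_self_iff_true, mul_zero, mul_one, sub_zero,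
        dif_pos, dif_neg, not_false_iff]
      have h3 : ∑ i : Fin N,
          conj' (A⁻¹ * ((e i * (u * w * e' j) - A * (w * (u * A') + B) * if i = j then 1 else 0) /
              (A + w * (u * B')))) * (A⁻¹ * e i)
          = A⁻¹ * A'⁻¹ * ((u * w) * (u * w * A' + B)⁻¹) *
              ((A' * A - B' * B) * (u⁻¹ * w⁻¹ * e j) - A' * (w⁻¹ * (u⁻¹ * A) + B') * e j) := by
        have hterm : ∀ i : Fin N,
            conj' (A⁻¹ * ((e i * (u * w * e' j) - A * (w * (u * A') + B) * if i = j then 1 else 0) /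
                (A + w * (u * B')))) * (A⁻¹ * e i)
            = (A⁻¹ * A'⁻¹ * ((u * w) * (u * w * A' + B)⁻¹) * (u⁻¹ * w⁻¹ * e j)) * (e' i * e i)
              + (if i = j then -(A⁻¹ * A'⁻¹ * ((u * w) * (u * w * A' + B)⁻¹) * (A' * (w⁻¹ * (u⁻¹ * A) + B')) * e i) else 0) := by
          intro i
          simp only [map_mul, map_inv₀, map_div₀, map_sub, map_add, cA, cA', cB, cB', cw, cu, ce, ce',
            cγ, apply_ite conj', map_one, map_zero, div_eq_mul_inv, mul_inv, inv_inv]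
          split_ifs with h
          · ring
          · ring
        rw [Finset.sum_congr rfl fun i _ => hterm i, Finset.sum_add_distrib, ← Finset.mul_sum, hS,
          Finset.sum_ite_eq' Finset.univ j
            (fun i => -(A⁻¹ * A'⁻¹ * ((u * w) * (u * w * A' + B)⁻¹) * (A' * (w⁻¹ * (u⁻¹ * A) + B')) * e i))]
        simp only [Finset.mem_univ, if_pos]
        ring
      rw [h3]
      simp only [map_mul, map_inv₀, cA, cw, cu, ce']
      field_simp [hA, hA', hw, hu, hγ, hγ₂]
      have hγ3 : A' * u * w + B ≠ 0 := fun h => hγ₂ (by linear_combination h)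
      linear_combination -(e j * B') * mul_inv_cancel₀ hγ3
    | succ k =>
      rw [Fin.sum_univ_succ]
      simp only [Fin.pred_succ, Fin.succ_ne_zero, zero_ne_succ', Fin.succ_inj, dite_true,
        dite_false, ite_true, ite_false, eq_self_iff_true, mul_zero, mul_one, sub_zero,
        dif_pos, dif_neg, not_false_iff]
      have h4 : ∑ i : Fin N,
          conj' (A⁻¹ * ((e i * (u * w * e' j) - A * (w * (u * A') + B) * if i = j then 1 else 0) /
              (A + w * (u * B')))) *
            (A⁻¹ * ((e i * (u * w * e' k) - A * (w * (u * A') + B) * if i = k then 1 else 0) /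
              (A + w * (u * B'))))
          = ((A⁻¹ * A'⁻¹ * (u * w) * (u⁻¹ * w⁻¹ * e j) * (u * w * e' k)) * (A' * A - B' * B)
              + -(A⁻¹ * A'⁻¹ * (u * w) * (A' * (w⁻¹ * (u⁻¹ * A) + B')) * (u * w * e' k)) * e j
              + -(A⁻¹ * A'⁻¹ * (u * w) * (u⁻¹ * w⁻¹ * e j) * (A * (w * (u * A') + B))) * e' k
              + (if j = k then
                  A⁻¹ * A'⁻¹ * (u * w) * (A' * (w⁻¹ * (u⁻¹ * A) + B')) * (A * (w * (u * A') + B))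
                else 0))
            * ((A + w * (u * B'))⁻¹ * (u * w * A' + B)⁻¹) := by
        have hterm : ∀ i : Fin N,
            conj' (A⁻¹ * ((e i * (u * w * e' j) - A * (w * (u * A') + B) * if i = j then 1 else 0) /
                (A + w * (u * B')))) *
              (A⁻¹ * ((e i * (u * w * e' k) - A * (w * (u * A') + B) * if i = k then 1 else 0) /
                (A + w * (u * B'))))
            = ((A⁻¹ * A'⁻¹ * (u * w) * (u⁻¹ * w⁻¹ * e j) * (u * w * e' k)) * (e' i * e i)
                + (if i = j then
                    -(A⁻¹ * A'⁻¹ * (u * w) * (A' * (w⁻¹ * (u⁻¹ * A) + B')) * (u * w * e' k)) * e i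
                  else 0)
                + (if i = k then
                    -(A⁻¹ * A'⁻¹ * (u * w) * (u⁻¹ * w⁻¹ * e j) * (A * (w * (u * A') + B))) * e' i
                  else 0)
                + (if i = j then
                    (if i = k then
                      A⁻¹ * A'⁻¹ * (u * w) * (A' * (w⁻¹ * (u⁻¹ * A) + B')) * (A * (w * (u * A') + B))
                    else 0)
                  else 0))
              * ((A + w * (u * B'))⁻¹ * (u * w * A' + B)⁻¹) := by
          intro i
          simp only [map_mul, map_inv₀, map_div₀, map_sub, map_add, cA, cA', cB, cB', cw, cu, ce, ce',
            cγ, apply_ite conj', map_one, map_zero, div_eq_mul_inv, mul_inv, inv_inv]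
          split_ifs with h1 h2 h2
          · ring
          · ring
          · ring
          · ring
        rw [Finset.sum_congr rfl fun i _ => hterm i, ← Finset.sum_mul]
        congr 1
        rw [Finset.sum_add_distrib, Finset.sum_add_distrib, Finset.sum_add_distrib,
          ← Finset.mul_sum, hS, Finset.sum_ite_eq' Finset.univ j, Finset.sum_ite_eq' Finset.univ k,
          Finset.sum_ite_eq' Finset.univ j]
        simp only [Finset.mem_univ, if_pos]
      have hX : ((A⁻¹ * A'⁻¹ * (u * w) * (u⁻¹ * w⁻¹ * e j) * (u * w * e' k)) * (A' * A - B' * B)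
              + -(A⁻¹ * A'⁻¹ * (u * w) * (A' * (w⁻¹ * (u⁻¹ * A) + B')) * (u * w * e' k)) * e j
              + -(A⁻¹ * A'⁻¹ * (u * w) * (u⁻¹ * w⁻¹ * e j) * (A * (w * (u * A') + B))) * e' k
              + (if j = k then
                  A⁻¹ * A'⁻¹ * (u * w) * (A' * (w⁻¹ * (u⁻¹ * A) + B')) * (A * (w * (u * A') + B))
                else 0))
          = (A⁻¹ * A'⁻¹) *
              (u * w * e j * e' k * (A' * A - B' * B)
                - A' * (A + w * (u * B')) * (u * w) * e' k * e j
                - e j * (A * (w * (u * A') + B)) * e' k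
                + (if j = k then A' * (A + w * (u * B')) * (A * (w * (u * A') + B)) else 0)) := by
        have hu1 : u * u⁻¹ = 1 := mul_inv_cancel₀ hu
        have hw1 : w * w⁻¹ = 1 := mul_inv_cancel₀ hw
        split_ifs with h
        · linear_combination
            (w * w⁻¹ * (A⁻¹ * A'⁻¹ * (u * w * e j * e' k * (A' * A - B' * B)
              - A' * A * (u * w) * e' k * e j - e j * (A * (w * (u * A') + B)) * e' k
              + A' * A * (A * (w * (u * A') + B))))) * hu1
            + (A⁻¹ * A'⁻¹ * (u * w * e j * e' k * (A' * A - B' * B)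
              - A' * A * (u * w) * e' k * e j - e j * (A * (w * (u * A') + B)) * e' k
              + A' * A * (A * (w * (u * A') + B)))) * hw1
        · linear_combination
            (w * w⁻¹ * (A⁻¹ * A'⁻¹ * (u * w * e j * e' k * (A' * A - B' * B)
              - A' * A * (u * w) * e' k * e j - e j * (A * (w * (u * A') + B)) * e' k))) * hu1
            + (A⁻¹ * A'⁻¹ * (u * w * e j * e' k * (A' * A - B' * B)
              - A' * A * (u * w) * e' k * e j - e j * (A * (w * (u * A') + B)) * e' k)) * hw1
      have hM : A * A' * ((A + w * (u * B')) * (u * w * A' + B)) ≠ 0 :=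
        mul_ne_zero (mul_ne_zero hA hA') (mul_ne_zero hγ hγ₂)
      have ht0M : conj' (A⁻¹ * (u * w * e' j)) * (A⁻¹ * (u * w * e' k)) *
          (A * A' * ((A + w * (u * B')) * (u * w * A' + B)))
          = e j * e' k * ((A + w * (u * B')) * (u * w * A' + B)) := by
        simp only [map_mul, map_inv₀, cA, cw, cu, ce']
        field_simp
      rw [h4, hX,
        show ∀ P : ℂ, (A⁻¹ * A'⁻¹) * P * ((A + w * (u * B'))⁻¹ * (u * w * A' + B)⁻¹)
            = P * (A * A' * ((A + w * (u * B')) * (u * w * A' + B)))⁻¹ from fun P => by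
          rw [mul_inv, mul_inv, mul_inv]; ring]
      apply mul_right_cancel₀ hM
      rw [add_mul, inv_mul_cancel_right₀ hM, ht0M]
      split_ifs with h
      · ring
      · ring


/-- The Claim of the paper: the `(N+1)×(N+1)` matrix
`V = (1/a) [ z₁ʳz₂ˢ b̃ , Ẽᵗ ; E , (EẼᵗ − a(z₁ʳz₂ˢ ã + b)I)/(a + z₁ʳz₂ˢ b̃) ]`
is unitary at every point of the 2-torus, under the hypotheses that `a` and
`a + z₁ʳz₂ˢ b̃` have no zeros on the closed bidisk and `‖E‖² = |a|² − |b|²` on the torus. -/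
theorem lurking_isometry_matrix_unitary (n m r s N : ℕ) (hN : 1 ≤ N)
    (a b : MvPolynomial (Fin 2) ℂ)
    (hadeg : ∀ j, a.degreeOf j ≤ ![n, m] j)
    (hbdeg : ∀ j, b.degreeOf j ≤ ![n, m] j)
    (E : Fin N → MvPolynomial (Fin 2) ℂ)
    (hEdeg : ∀ i j, (E i).degreeOf j ≤ ![n + r, m + s] j)
    (haz : ∀ z : Fin 2 → ℂ, (∀ j, ‖z j‖ ≤ 1) → eval z a ≠ 0)
    (habz : ∀ z : Fin 2 → ℂ, (∀ j, ‖z j‖ ≤ 1) →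
      eval z a + z 0 ^ r * z 1 ^ s * eval z (reflect ![n, m] b) ≠ 0)
    (hsos : ∀ z : Fin 2 → ℂ, (∀ j, ‖z j‖ = 1) →
      ∑ i, ‖eval z (E i)‖ ^ 2 = ‖eval z a‖ ^ 2 - ‖eval z b‖ ^ 2)
    (z : Fin 2 → ℂ) (hz : ∀ j, ‖z j‖ = 1) :
    (Matrix.of fun i k : Fin (N + 1) =>
      (eval z a)⁻¹ *
        if hi : i = 0 then
          if hk : k = 0 then
            z 0 ^ r * z 1 ^ s * eval z (reflect ![n, m] b)
          else
            eval z (reflect ![n + r, m + s] (E (k.pred hk)))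
        else
          if hk : k = 0 then
            eval z (E (i.pred hi))
          else
            (eval z (E (i.pred hi)) * eval z (reflect ![n + r, m + s] (E (k.pred hk)))
                - eval z a *
                    (z 0 ^ r * z 1 ^ s * eval z (reflect ![n, m] a) + eval z b) *
                    (if i = k then 1 else 0)) /
              (eval z a + z 0 ^ r * z 1 ^ s * eval z (reflect ![n, m] b)))
      ∈ Matrix.unitaryGroup (Fin (N + 1)) ℂ := by
  have hz01 : ∀ j, ‖z j‖ ≤ 1 := fun j => le_of_eq (hz j)
  have hzne : ∀ j, z j ≠ 0 := by
    intro j h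
    simpa [h] using hz j
  have hcz : ∀ j, conj' (z j) = (z j)⁻¹ := by
    intro j
    have h1 : Complex.normSq (z j) = 1 := by
      rw [Complex.normSq_eq_norm_sq, hz j, one_pow]
    rw [Complex.inv_def, h1]
    norm_num
  have hb' : eval z (reflect ![n, m] b) = z 0 ^ n * z 1 ^ m * conj' (eval z b) :=
    reflect_eval₂ n m b hbdeg z hz
  have ha' : eval z (reflect ![n, m] a) = z 0 ^ n * z 1 ^ m * conj' (eval z a) :=
    reflect_eval₂ n m a hadeg z hz
  have hE' : ∀ i, eval z (reflect ![n + r, m + s] (E i))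
      = z 0 ^ n * z 1 ^ m * (z 0 ^ r * z 1 ^ s) * conj' (eval z (E i)) := by
    intro i
    rw [reflect_eval₂ (n + r) (m + s) (E i) (hEdeg i) z hz, pow_add, pow_add]
    ring
  have hA : eval z a ≠ 0 := haz z hz01
  have hA' : conj' (eval z a) ≠ 0 := by
    intro h
    apply hA
    have := congrArg conj' h
    simpa using this
  have hw : z 0 ^ r * z 1 ^ s ≠ 0 := mul_ne_zero (pow_ne_zero _ (hzne 0)) (pow_ne_zero _ (hzne 1))
  have hu : z 0 ^ n * z 1 ^ m ≠ 0 := mul_ne_zero (pow_ne_zero _ (hzne 0)) (pow_ne_zero _ (hzne 1))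
  have cw : conj' (z 0 ^ r * z 1 ^ s) = (z 0 ^ r * z 1 ^ s)⁻¹ := by
    rw [map_mul, map_pow, map_pow, hcz 0, hcz 1, mul_inv, inv_pow, inv_pow]
  have cu : conj' (z 0 ^ n * z 1 ^ m) = (z 0 ^ n * z 1 ^ m)⁻¹ := by
    rw [map_mul, map_pow, map_pow, hcz 0, hcz 1, mul_inv, inv_pow, inv_pow]
  have hγ : eval z a + (z 0 ^ r * z 1 ^ s) * ((z 0 ^ n * z 1 ^ m) * conj' (eval z b)) ≠ 0 := by
    have := habz z hz01
    rw [hb'] at this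
    convert this using 2
  have hγ' : conj' (eval z a) + (z 0 ^ r * z 1 ^ s)⁻¹ * ((z 0 ^ n * z 1 ^ m)⁻¹ * eval z b) ≠ 0 := by
    intro h
    apply hγ
    have h2 := congrArg conj' h
    simp only [map_add, map_mul, map_inv₀, cw, cu, Complex.conj_conj, inv_inv, map_zero] at h2
    exact h2
  have hmc : ∀ x : ℂ, conj' x * x = ((‖x‖ ^ 2 : ℝ) : ℂ) := by
    intro x
    rw [mul_comm, Complex.mul_conj']
    norm_cast
  have hS : ∑ i, conj' (eval z (E i)) * eval z (E i)
      = conj' (eval z a) * eval z a - conj' (eval z b) * eval z b := by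
    simp only [hmc]
    rw [← Complex.ofReal_sum, hsos z hz, Complex.ofReal_sub]
  simp only [hb', ha', hE']
  exact key (eval z a) (conj' (eval z a)) (eval z b) (conj' (eval z b))
    (z 0 ^ r * z 1 ^ s) (z 0 ^ n * z 1 ^ m)
    (fun i => eval z (E i)) (fun i => conj' (eval z (E i)))
    hA hA' hw hu hγ hγ' rfl (Complex.conj_conj _) rfl (Complex.conj_conj _)
    cw cu (fun i => rfl) (fun i => Complex.conj_conj _) hS
end

section
/- Let p ∈ ℂ[z₁,…,z_n] be a polynomial of multidegree at most d = (d₁,…,d_n) with no zeros in the open polydisk 𝔻ⁿ, and let p̃ be its reflection at degree d. Then |p̃(z)| = |p(z)| for every z ∈ 𝕋ⁿ, and |p̃(z)| ≤ |p(z)| for every z ∈ 𝔻ⁿ. (Hence the rational function p̃/p is inner on the polydisk: it has modulus one on the n-torus and modulus at most one on 𝔻ⁿ.) -/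
open MvPolynomial

lemma key_s14 (r l : ℂ) (hr : 1 ≤ ‖r‖) (hl : ‖l‖ ≤ 1) : ‖1 - (starRingEnd ℂ) r * l‖ ≤ ‖l - r‖ := by
  have hr' : 1 ≤ Complex.normSq r := by
    rw [Complex.normSq_eq_norm_sq]; nlinarith
  have hl' : Complex.normSq l ≤ 1 := by
    rw [Complex.normSq_eq_norm_sq]
    nlinarith [norm_nonneg l]
  have h1 : Complex.normSq (1 - (starRingEnd ℂ) r * l) ≤ Complex.normSq (l - r) := by
    simp only [Complex.normSq_apply, Complex.sub_re, Complex.sub_im, Complex.mul_re,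
      Complex.mul_im, Complex.one_re, Complex.one_im, Complex.conj_re, Complex.conj_im] at *
    nlinarith
  calc ‖1 - (starRingEnd ℂ) r * l‖ = Real.sqrt (Complex.normSq _) := by
        rw [Complex.norm_def]
    _ ≤ Real.sqrt (Complex.normSq (l - r)) := Real.sqrt_le_sqrt h1
    _ = ‖l - r‖ := by rw [Complex.norm_def]

lemma key2 (z l : ℂ) (hz : ‖z‖ < 1) (hl : ‖l‖ < 1) : ‖l + z‖ < ‖1 + (starRingEnd ℂ) z * l‖ := by
  have hz' : Complex.normSq z < 1 := by
    rw [Complex.normSq_eq_norm_sq]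
    nlinarith [norm_nonneg z]
  have hl' : Complex.normSq l < 1 := by
    rw [Complex.normSq_eq_norm_sq]
    nlinarith [norm_nonneg l]
  have h1 : Complex.normSq (l + z) < Complex.normSq (1 + (starRingEnd ℂ) z * l) := by
    simp only [Complex.normSq_apply, Complex.add_re, Complex.add_im, Complex.mul_re,
      Complex.mul_im, Complex.one_re, Complex.one_im, Complex.conj_re, Complex.conj_im] at *
    nlinarith
  rw [Complex.norm_def, Complex.norm_def]
  exact Real.sqrt_lt_sqrt (Complex.normSq_nonneg _) h1

lemma prodle (l : ℂ) (hl : ‖l‖ ≤ 1) (s : Multiset ℂ) (hs : ∀ r ∈ s, 1 ≤ ‖r‖) :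
    ‖(s.map fun r => 1 - (starRingEnd ℂ) r * l).prod‖ ≤ ‖(s.map fun r => l - r).prod‖ := by
  induction s using Multiset.induction_on with
  | empty => simp
  | cons a t ih =>
    simp only [Multiset.map_cons, Multiset.prod_cons, norm_mul]
    have h1 := key_s14 a l (hs a (Multiset.mem_cons_self a t)) hl
    have h2 := ih fun r hr => hs r (Multiset.mem_cons_of_mem hr)
    exact mul_le_mul h1 h2 (norm_nonneg _) (norm_nonneg _)


lemma eval_reflect {k : ℕ} (d : Fin k → ℕ) (p : MvPolynomial (Fin k) ℂ) (z : Fin k → ℂ) :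
    MvPolynomial.eval z (reflect d p)
      = ∑ α ∈ p.support, (starRingEnd ℂ) (coeff α p) * ∏ j, z j ^ (d j - α j) := by
  unfold reflect
  rw [map_sum]
  refine Finset.sum_congr rfl fun α _ => ?_
  rw [eval_monomial]
  congr 1
  rw [Finsupp.prod_fintype]
  · simp
  · intro j; simp

set_option maxHeartbeats 2000000 in
/-- If `p ∈ ℂ[z₁,…,zₙ]` has multidegree at most `d` and no zeros in the open polydisk, and
`p̃` is its reflection at degree `d`, then `|p̃| = |p|` on the `n`-torus and `|p̃| ≤ |p|` on
the open polydisk; i.e. `p̃/p` is a rational inner function. -/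
theorem reflection_quotient_inner (n : ℕ) (d : Fin n → ℕ) (p : MvPolynomial (Fin n) ℂ)
    (hdeg : ∀ j, p.degreeOf j ≤ d j)
    (hpz : ∀ z : Fin n → ℂ, (∀ j, ‖z j‖ < 1) → eval z p ≠ 0) :
    (∀ z : Fin n → ℂ, (∀ j, ‖z j‖ = 1) →
      ‖eval z (reflect d p)‖ = ‖eval z p‖) ∧
    (∀ z : Fin n → ℂ, (∀ j, ‖z j‖ < 1) →
      ‖eval z (reflect d p)‖ ≤ ‖eval z p‖) := by
  refine ⟨fun z hz => ?_, fun z hz => ?_⟩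
  · rw [eval_reflect]

    have hid : ∑ α ∈ p.support, (starRingEnd ℂ) (coeff α p) * ∏ j, z j ^ (d j - α j)
        = (∏ j, z j ^ d j) * (starRingEnd ℂ) (eval z p) := by
      rw [eval_eq', map_sum, Finset.mul_sum]
      refine Finset.sum_congr rfl fun α hα => ?_
      rw [map_mul, map_prod]
      have hprod : (∏ j, z j ^ (d j - α j))
          = ∏ j, z j ^ d j * (starRingEnd ℂ) (z j ^ α j) := by
        refine Finset.prod_congr rfl fun j _ => ?_
        have hαd : α j ≤ d j := le_trans (monomial_le_degreeOf j hα) (hdeg j)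
        have hzz : z j * (starRingEnd ℂ) (z j) = 1 := by
          rw [Complex.mul_conj]
          norm_cast
          rw [Complex.normSq_eq_norm_sq, hz j]; norm_num
        calc z j ^ (d j - α j) = z j ^ (d j - α j) * (z j * (starRingEnd ℂ) (z j)) ^ (α j) := by
              rw [hzz]; ring
          _ = z j ^ d j * (starRingEnd ℂ) (z j ^ α j) := by
              rw [mul_pow, map_pow, ← mul_assoc, ← pow_add, Nat.sub_add_cancel hαd]
      rw [hprod, Finset.prod_mul_distrib]
      ring
    rw [hid, norm_mul, RingHomIsometric.norm_map]
    have : ‖∏ j, z j ^ d j‖ = 1 := by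
      rw [norm_prod]
      refine Finset.prod_eq_one fun j _ => ?_
      rw [norm_pow, hz j, one_pow]
    rw [this, one_mul]

  · rw [eval_reflect]

    set b : Fin n → ℂ := fun j => (starRingEnd ℂ) (z j) with hb
    set P : Polynomial ℂ := ∑ α ∈ p.support, Polynomial.C (coeff α p) *
        ∏ j, ((Polynomial.X + Polynomial.C (z j)) ^ (α j)
          * (1 + Polynomial.C (b j) * Polynomial.X) ^ (d j - α j)) with hP
    have hPe : ∀ μ : ℂ, P.eval μ = ∑ α ∈ p.support, coeff α p
        * ∏ j, ((μ + z j) ^ (α j) * (1 + b j * μ) ^ (d j - α j)) := by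
      intro μ
      rw [hP, Polynomial.eval_finset_sum]
      refine Finset.sum_congr rfl fun α _ => ?_
      simp [Polynomial.eval_prod]
    have hden : ∀ (μ : ℂ), ‖μ‖ < 1 → ∀ j, (1 : ℂ) + b j * μ ≠ 0 := by
      intro μ hμ j h
      have h1 : ‖b j * μ‖ < 1 := by
        rw [norm_mul, hb, RingHomIsometric.norm_map]
        calc ‖z j‖ * ‖μ‖ ≤ 1 * ‖μ‖ := by
              exact mul_le_mul_of_nonneg_right (le_of_lt (hz j)) (norm_nonneg _)
          _ < 1 := by rwa [one_mul]
      have : b j * μ = -1 := by linear_combination h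
      rw [this] at h1; simp at h1
    have hne : ∀ μ : ℂ, ‖μ‖ < 1 → P.eval μ ≠ 0 := by
      intro μ hμ
      set w : Fin n → ℂ := fun j => (μ + z j) / (1 + b j * μ) with hw
      have hwlt : ∀ j, ‖w j‖ < 1 := by
        intro j
        have hkey := key2 (z j) μ (hz j) hμ
        have hpos : 0 < ‖(1:ℂ) + b j * μ‖ := norm_pos_iff.mpr (hden μ hμ j)
        rw [hw]
        simp only [norm_div]
        rw [div_lt_one hpos]
        exact hkey
      have hPw : P.eval μ = (∏ j, (1 + b j * μ) ^ (d j)) * eval w p := by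
        rw [hPe, eval_eq', Finset.mul_sum]
        refine Finset.sum_congr rfl fun α hα => ?_
        have hterm : ∀ j, (μ + z j) ^ (α j) * (1 + b j * μ) ^ (d j - α j)
            = (1 + b j * μ) ^ (d j) * w j ^ (α j) := by
          intro j
          have hαd : α j ≤ d j := le_trans (monomial_le_degreeOf j hα) (hdeg j)
          have hμz : μ + z j = w j * (1 + b j * μ) := by
            rw [hw, div_mul_cancel₀ _ (hden μ hμ j)]
          rw [hμz, mul_pow, mul_assoc, ← pow_add]
          rw [Nat.add_sub_cancel' hαd]
          ring
        simp only [hterm]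
        rw [Finset.prod_mul_distrib]
        ring
      rw [hPw]
      exact mul_ne_zero (Finset.prod_ne_zero_iff.mpr fun j _ => pow_ne_zero _ (hden μ hμ j))
        (hpz w hwlt)
    set D : ℕ := ∑ j, d j with hD
    have hdegP : P.natDegree ≤ D := by
      rw [hP]
      refine Polynomial.natDegree_sum_le_of_forall_le _ _ fun α hα => ?_
      refine le_trans (Polynomial.natDegree_C_mul_le _ _) ?_
      refine le_trans (Polynomial.natDegree_prod_le _ _) ?_
      rw [hD]
      refine Finset.sum_le_sum fun j _ => ?_
      have hαd : α j ≤ d j := le_trans (monomial_le_degreeOf j hα) (hdeg j)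
      refine le_trans (Polynomial.natDegree_mul_le) ?_
      have h1 : ((Polynomial.X + Polynomial.C (z j)) ^ (α j)).natDegree ≤ α j := by
        refine le_trans (Polynomial.natDegree_pow_le) ?_
        simp [Polynomial.natDegree_X_add_C]
      have hb1 : (1 + Polynomial.C (b j) * Polynomial.X).natDegree ≤ 1 := by
        refine le_trans (Polynomial.natDegree_add_le _ _) ?_
        simp only [Polynomial.natDegree_one, max_le_iff]
        exact ⟨Nat.zero_le _, le_trans (Polynomial.natDegree_mul_le) (by simp)⟩
      have h2 : ((1 + Polynomial.C (b j) * Polynomial.X) ^ (d j - α j)).natDegree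
          ≤ (d j - α j) * 1 :=
        le_trans (Polynomial.natDegree_pow_le) (Nat.mul_le_mul_left (d j - α j) hb1)
      omega
    have hP0 : P ≠ 0 := by
      intro h
      exact hne 0 (by simp) (by rw [h]; simp)
    have hsplit : Polynomial.Splits P := IsAlgClosed.splits P
    have hfac : P = Polynomial.C P.leadingCoeff
        * (P.roots.map fun r => Polynomial.X - Polynomial.C r).prod :=
      hsplit.eq_prod_roots
    have hcard : P.roots.card = P.natDegree := by
      have := hsplit.natDegree_eq_card_roots
      omega
    have hroots : ∀ r ∈ P.roots, 1 ≤ ‖r‖ := by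
      intro r hr
      by_contra h
      exact hne r (lt_of_not_ge h) ((Polynomial.mem_roots hP0).mp hr)
    set Q : Polynomial ℂ := ∑ α ∈ p.support, Polynomial.C ((starRingEnd ℂ) (coeff α p)) *
        ∏ j, ((Polynomial.X + Polynomial.C (z j)) ^ (d j - α j)
          * (1 + Polynomial.C (b j) * Polynomial.X) ^ (α j)) with hQ
    have hQe : ∀ μ : ℂ, Q.eval μ = ∑ α ∈ p.support, (starRingEnd ℂ) (coeff α p)
        * ∏ j, ((μ + z j) ^ (d j - α j) * (1 + b j * μ) ^ (α j)) := by
      intro μ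
      rw [hQ, Polynomial.eval_finset_sum]
      refine Finset.sum_congr rfl fun α _ => ?_
      simp [Polynomial.eval_prod]
    have hfun : ∀ l : ℂ, l ≠ 0 →
        Q.eval l = l ^ D * (starRingEnd ℂ) (P.eval (((starRingEnd ℂ) l)⁻¹)) := by
      intro l hl
      rw [hQe, hPe, map_sum, Finset.mul_sum]
      refine Finset.sum_congr rfl fun α hα => ?_
      have hαd : ∀ j, α j ≤ d j := fun j => le_trans (monomial_le_degreeOf j hα) (hdeg j)
      rw [map_mul, map_prod]
      have hconj : ∀ j, (starRingEnd ℂ) ((((starRingEnd ℂ) l)⁻¹ + z j) ^ (α j)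
          * (1 + b j * ((starRingEnd ℂ) l)⁻¹) ^ (d j - α j))
          = (l⁻¹ + b j) ^ (α j) * (1 + z j * l⁻¹) ^ (d j - α j) := by
        intro j
        simp only [map_mul, map_pow, map_add, map_one, map_inv₀, hb, Complex.conj_conj]
      have hlD : (l : ℂ) ^ D = ∏ j, l ^ (d j) := by
        rw [hD, Finset.prod_pow_eq_pow_sum]
      have hkey : ∀ j, l ^ (d j) * ((l⁻¹ + b j) ^ (α j) * (1 + z j * l⁻¹) ^ (d j - α j))
          = (l + z j) ^ (d j - α j) * (1 + b j * l) ^ (α j) := by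
        intro j
        have e0 : l ^ (d j) = l ^ (α j) * l ^ (d j - α j) := by
          rw [← pow_add, Nat.add_sub_cancel' (hαd j)]
        have e1 : l * (l⁻¹ + b j) = 1 + b j * l := by
          field_simp
        have e2 : l * (1 + z j * l⁻¹) = l + z j := by
          field_simp
        calc l ^ (d j) * ((l⁻¹ + b j) ^ (α j) * (1 + z j * l⁻¹) ^ (d j - α j))
            = (l * (l⁻¹ + b j)) ^ (α j) * (l * (1 + z j * l⁻¹)) ^ (d j - α j) := by
              rw [mul_pow, mul_pow, e0]; ring
          _ = (l + z j) ^ (d j - α j) * (1 + b j * l) ^ (α j) := by rw [e1, e2]; ring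
      calc (starRingEnd ℂ) (coeff α p)
            * ∏ j, ((l + z j) ^ (d j - α j) * (1 + b j * l) ^ (α j))
          = (starRingEnd ℂ) (coeff α p)
            * ∏ j, (l ^ (d j) * ((l⁻¹ + b j) ^ (α j) * (1 + z j * l⁻¹) ^ (d j - α j))) := by
            rw [Finset.prod_congr rfl fun j _ => (hkey j).symm]
        _ = l ^ D * ((starRingEnd ℂ) (coeff α p) * ∏ j, (starRingEnd ℂ)
              ((((starRingEnd ℂ) l)⁻¹ + z j) ^ (α j)
                * (1 + b j * ((starRingEnd ℂ) l)⁻¹) ^ (d j - α j))) := by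
            rw [Finset.prod_mul_distrib, ← hlD,
              Finset.prod_congr rfl fun j _ => hconj j]
            ring
    have hPl : ∀ μ : ℂ, P.eval μ
        = P.leadingCoeff * ((P.roots.map fun r => μ - r)).prod := by
      intro μ
      conv_lhs => rw [hfac]
      rw [Polynomial.eval_mul, Polynomial.eval_C, Polynomial.eval_multiset_prod,
        Multiset.map_map]
      simp [Function.comp]
    have hineq : ∀ l : ℂ, l ≠ 0 → ‖l‖ < 1 → ‖Q.eval l‖ ≤ ‖P.eval l‖ := by
      intro l hl0 hl1
      have hm : Multiset.card P.roots ≤ D := hcard ▸ hdegP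
      have step1 : Q.eval l = (starRingEnd ℂ) P.leadingCoeff * (l ^ (D - Multiset.card P.roots)
          * (P.roots.map fun r => 1 - (starRingEnd ℂ) r * l).prod) := by
        rw [hfun l hl0, hPl, map_mul, map_multiset_prod, Multiset.map_map]
        have hmap : ∀ r : ℂ, l * ((starRingEnd ℂ) (((starRingEnd ℂ) l)⁻¹ - r))
            = 1 - (starRingEnd ℂ) r * l := by
          intro r
          rw [map_sub, map_inv₀, Complex.conj_conj]
          field_simp
        have hpowm : l ^ D = l ^ (D - Multiset.card P.roots) * l ^ (Multiset.card P.roots) := by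
          rw [← pow_add, Nat.sub_add_cancel hm]
        have hlm : l ^ (Multiset.card P.roots) = (P.roots.map fun _ => l).prod := by
          rw [Multiset.map_const', Multiset.prod_replicate]
        calc l ^ D * ((starRingEnd ℂ) P.leadingCoeff
              * (P.roots.map fun r => (starRingEnd ℂ) (((starRingEnd ℂ) l)⁻¹ - r)).prod)
            = (starRingEnd ℂ) P.leadingCoeff * (l ^ (D - Multiset.card P.roots)
              * ((P.roots.map fun _ => l).prod
                * (P.roots.map fun r => (starRingEnd ℂ) (((starRingEnd ℂ) l)⁻¹ - r)).prod)) := by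
              rw [hpowm, hlm]; ring
          _ = _ := by
              rw [← Multiset.prod_map_mul,
                Multiset.map_congr rfl fun r _ => hmap r]
      rw [step1, hPl]
      rw [norm_mul, norm_mul, norm_mul, norm_pow, RingHomIsometric.norm_map]
      refine mul_le_mul_of_nonneg_left ?_ (norm_nonneg _)
      calc ‖l‖ ^ (D - Multiset.card P.roots)
            * ‖(P.roots.map fun r => 1 - (starRingEnd ℂ) r * l).prod‖
          ≤ 1 * ‖(P.roots.map fun r => l - r).prod‖ := by
            refine mul_le_mul ?_ ?_ (norm_nonneg _) zero_le_one
            · exact pow_le_one₀ (norm_nonneg _) (le_of_lt hl1)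
            · exact prodle l (le_of_lt hl1) P.roots hroots
        _ = ‖(P.roots.map fun r => l - r).prod‖ := one_mul _
    have hQ0le : ‖Q.eval 0‖ ≤ ‖P.eval 0‖ := by
      set u : ℕ → ℂ := fun k => ((((k : ℝ) + 2)⁻¹ : ℝ) : ℂ) with hu_def
      have h1 : Filter.Tendsto (fun k : ℕ => ((k : ℝ) + 2)⁻¹) Filter.atTop (nhds 0) :=
        (Filter.tendsto_atTop_add_const_right _ 2
          tendsto_natCast_atTop_atTop).inv_tendsto_atTop
      have hu : Filter.Tendsto u Filter.atTop (nhds 0) := by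
        have := (Complex.continuous_ofReal.tendsto 0).comp h1
        simpa [hu_def, Function.comp_def] using this
      have hQt : Filter.Tendsto (fun k : ℕ => ‖Q.eval (u k)‖)
          Filter.atTop (nhds ‖Q.eval 0‖) := ((Q.continuous.norm.tendsto 0).comp hu)
      have hPt : Filter.Tendsto (fun k : ℕ => ‖P.eval (u k)‖)
          Filter.atTop (nhds ‖P.eval 0‖) := ((P.continuous.norm.tendsto 0).comp hu)
      refine le_of_tendsto_of_tendsto' hQt hPt fun k => ?_
      have hkpos : (0 : ℝ) < ((k : ℝ) + 2)⁻¹ := by positivity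
      have hk0 : u k ≠ 0 := by
        show ((((k : ℝ) + 2)⁻¹ : ℝ) : ℂ) ≠ 0
        exact_mod_cast ne_of_gt hkpos
      have hk1 : ‖u k‖ < 1 := by
        show ‖((((k : ℝ) + 2)⁻¹ : ℝ) : ℂ)‖ < 1
        simp only [Complex.norm_real, Real.norm_eq_abs, abs_of_pos hkpos]
        rw [inv_lt_one_iff₀]
        right
        have : (0:ℝ) ≤ (k:ℝ) := Nat.cast_nonneg k
        linarith
      exact hineq (u k) hk0 hk1
    have hQz : Q.eval 0 = ∑ α ∈ p.support,
        (starRingEnd ℂ) (coeff α p) * ∏ j, z j ^ (d j - α j) := by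
      rw [hQe]
      refine Finset.sum_congr rfl fun α _ => ?_
      congr 1
      refine Finset.prod_congr rfl fun j _ => ?_
      simp
    have hPz : P.eval 0 = eval z p := by
      rw [hPe, eval_eq']
      refine Finset.sum_congr rfl fun α _ => ?_
      congr 1
      refine Finset.prod_congr rfl fun j _ => ?_
      simp
    rw [← hQz, ← hPz]
    exact hQ0le
end
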